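/- Let φ: P^1 → P^2 be given by (X1:X2) ↦ (g1:g2:g3)(X1,X2) with g1,g2,g3 homogeneous of degree d whose gcd has degree < d. If (p,q) is a basis of the syzygy module of (g1,g2,g3) over K[X1,X2] (a μ-basis), viewed as polynomials p = Σ p_i(X) T_i and q = Σ q_i(X) T_i in K[X1,X2,T1,T2,T3], then (p,q) is a regular sequence in K[X1,X2,T1,T2,T3]. -/

import Mathlib

open MvPolynomial

namespace Stmt9Aux

variable {R : Type*} [CommRing R] {σ : Type*}

noncomputable def Phi : MvPolynomial σ R →ₐ[R] Polynomial (MvPolynomial σ R) :=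
  aeval fun i => Polynomial.C (X i) * Polynomial.X

lemma evalOne_comp_Phi :
    (Polynomial.evalRingHom (1 : MvPolynomial σ R)).comp (Phi (R := R) (σ := σ)).toRingHom
      = RingHom.id _ := by
  apply MvPolynomial.ringHom_ext <;> intro r <;>
    simp [Phi, Polynomial.algebraMap_apply]

lemma evalOne_Phi (u : MvPolynomial σ R) : Polynomial.eval 1 (Phi u) = u :=
  RingHom.congr_fun evalOne_comp_Phi u

lemma Phi_ne_zero {u : MvPolynomial σ R} (hu : u ≠ 0) : Phi u ≠ 0 := fun h => by
  apply hu
  rw [← evalOne_Phi u, h, Polynomial.eval_zero]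

lemma evalZero_comp_Phi :
    (Polynomial.evalRingHom (0 : MvPolynomial σ R)).comp (Phi (R := R) (σ := σ)).toRingHom
      = (MvPolynomial.C (σ := σ) (R := R)).comp (constantCoeff) := by
  apply MvPolynomial.ringHom_ext <;> intro r <;>
    simp [Phi, Polynomial.algebraMap_apply]

lemma eq_C_of_Phi_natDegree_zero {u : MvPolynomial σ R} (h : (Phi u).natDegree = 0) :
    u = C (constantCoeff u) := by
  obtain ⟨c, hc⟩ := Polynomial.natDegree_eq_zero.mp h
  have h1 : u = c := by rw [← evalOne_Phi u, ← hc, Polynomial.eval_C]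
  have h2 : C (constantCoeff u) = c := by
    have := RingHom.congr_fun (evalZero_comp_Phi (R := R) (σ := σ)) u
    simp only [RingHom.comp_apply, AlgHom.toRingHom_eq_coe, RingHom.coe_coe] at this
    rw [← hc] at this
    simpa using this.symm
  rw [h1] at h2 ⊢
  exact h2.symm

lemma coeff_lin {K : Type*} [CommRing K] (r : Fin 3 → MvPolynomial (Fin 2) K) (i : Fin 3) :
    coeff (Finsupp.single i 1)
      (∑ j, (C (r j) * X j : MvPolynomial (Fin 3) (MvPolynomial (Fin 2) K))) = r i := by
  classical
  rw [coeff_sum, Finset.sum_eq_single i]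
  · simp [coeff_C_mul]
  · intro j _ hj
    rw [coeff_C_mul, coeff_X', if_neg, mul_zero]
    rw [Finsupp.single_left_inj one_ne_zero]
    exact hj
  · simp

lemma Phi_lin {K : Type*} [CommRing K] (r : Fin 3 → MvPolynomial (Fin 2) K) :
    Phi (∑ j, (C (r j) * X j : MvPolynomial (Fin 3) (MvPolynomial (Fin 2) K)))
      = Polynomial.C (∑ j, (C (r j) * X j : MvPolynomial (Fin 3) (MvPolynomial (Fin 2) K)))
        * Polynomial.X := by
  have h : ∀ j : Fin 3, Phi (C (r j) * X j : MvPolynomial (Fin 3) (MvPolynomial (Fin 2) K))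
      = Polynomial.C (C (r j) * X j) * Polynomial.X := by
    intro j
    simp only [Phi, map_mul, aeval_C, aeval_X, Polynomial.algebraMap_apply, map_mul]
    rw [MvPolynomial.algebraMap_eq, mul_assoc]
  rw [map_sum]
  simp_rw [h]
  rw [← Finset.sum_mul, ← map_sum]

theorem relPrime {K : Type*} [Field K]
    (g p q : Fin 3 → MvPolynomial (Fin 2) K)
    (hpsyz : ∑ i, p i * g i = 0)
    (hgen : ∀ a : Fin 3 → MvPolynomial (Fin 2) K, ∑ i, a i * g i = 0 →
      ∃ c e : MvPolynomial (Fin 2) K, ∀ i, a i = c * p i + e * q i)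
    (hindep : ∀ c e : MvPolynomial (Fin 2) K, (∀ i, c * p i + e * q i = 0) →
      c = 0 ∧ e = 0) :
    IsRelPrime (∑ i, (C (p i) * X i : MvPolynomial (Fin 3) (MvPolynomial (Fin 2) K)))
      (∑ i, (C (q i) * X i : MvPolynomial (Fin 3) (MvPolynomial (Fin 2) K))) := by
  classical
  have hPne : (∑ j, (C (p j) * X j : MvPolynomial (Fin 3) (MvPolynomial (Fin 2) K))) ≠ 0 := by
    intro h0
    refine one_ne_zero (hindep 1 0 (fun i => ?_)).1
    have := coeff_lin p i
    rw [h0, coeff_zero] at this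
    rw [← this]; ring
  have hQne : (∑ j, (C (q j) * X j : MvPolynomial (Fin 3) (MvPolynomial (Fin 2) K))) ≠ 0 := by
    intro h0
    refine one_ne_zero (hindep 0 1 (fun i => ?_)).2
    have := coeff_lin q i
    rw [h0, coeff_zero] at this
    rw [← this]; ring
  intro h hdP hdQ
  obtain ⟨a, ha⟩ := hdP
  obtain ⟨b, hb⟩ := hdQ
  have hh0 : h ≠ 0 := by rintro rfl; rw [zero_mul] at ha; exact hPne ha
  have ha0 : a ≠ 0 := by rintro rfl; rw [mul_zero] at ha; exact hPne ha
  have hb0 : b ≠ 0 := by rintro rfl; rw [mul_zero] at hb; exact hQne hb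
  have hdeg : (Phi h).natDegree + (Phi a).natDegree = 1 := by
    rw [← Polynomial.natDegree_mul (Phi_ne_zero hh0) (Phi_ne_zero ha0), ← map_mul, ← ha,
      Phi_lin p, Polynomial.natDegree_C_mul_X _ hPne]
  have hdegQ : (Phi h).natDegree + (Phi b).natDegree = 1 := by
    rw [← Polynomial.natDegree_mul (Phi_ne_zero hh0) (Phi_ne_zero hb0), ← map_mul, ← hb,
      Phi_lin q, Polynomial.natDegree_C_mul_X _ hQne]
  have hcases : (Phi h).natDegree = 0 ∨ ((Phi a).natDegree = 0 ∧ (Phi b).natDegree = 0) := by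
    omega
  rcases hcases with h0 | ⟨ha1, hb1⟩
  · -- h is a "constant" C s
    have hC := eq_C_of_Phi_natDegree_zero h0
    set s := constantCoeff h with hs
    have hs0 : s ≠ 0 := fun h' => hh0 (by rw [hC, h', map_zero])
    have hpi : ∀ i, p i = s * coeff (Finsupp.single i 1) a := by
      intro i
      rw [← coeff_lin p i, ha, hC, coeff_C_mul]
    have hsum : ∑ i, coeff (Finsupp.single i 1) a * g i = 0 := by
      have h1 : s * ∑ i, coeff (Finsupp.single i 1) a * g i = 0 := by
        rw [Finset.mul_sum, ← hpsyz]
        exact Finset.sum_congr rfl fun i _ => by rw [hpi i]; ring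
      exact (mul_eq_zero.mp h1).resolve_left hs0
    obtain ⟨c, e, hce⟩ := hgen _ hsum
    have key : ∀ i, (s * c - 1) * p i + (s * e) * q i = 0 := by
      intro i
      have h1 := hce i
      have h2 := hpi i
      linear_combination (-s) * h1 - h2
    obtain ⟨h1, _⟩ := hindep _ _ key
    have hu : IsUnit s := IsUnit.of_mul_eq_one c (by rwa [sub_eq_zero] at h1)
    rw [hC]
    exact hu.map MvPolynomial.C
  · -- a and b are constants
    have haC := eq_C_of_Phi_natDegree_zero ha1
    have hbC := eq_C_of_Phi_natDegree_zero hb1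
    have hpi : ∀ i, p i = constantCoeff a * coeff (Finsupp.single i 1) h := by
      intro i
      rw [← coeff_lin p i, ha, haC, mul_comm h, coeff_C_mul]
      simp
    have hqi : ∀ i, q i = constantCoeff b * coeff (Finsupp.single i 1) h := by
      intro i
      rw [← coeff_lin q i, hb, hbC, mul_comm h, coeff_C_mul]
      simp
    have key : ∀ i, constantCoeff b * p i + (-(constantCoeff a)) * q i = 0 := by
      intro i
      rw [hpi, hqi]; ring
    obtain ⟨h1, h2⟩ := hindep _ _ key
    exfalso
    apply hPne
    rw [ha, haC, neg_eq_zero.mp h2, map_zero, mul_zero]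

noncomputable def toB (K : Type*) [CommSemiring K] :
    MvPolynomial (Fin 5) K ≃ₐ[K] MvPolynomial (Fin 3) (MvPolynomial (Fin 2) K) :=
  (renameEquiv K (((finSumFinEquiv (m := 2) (n := 3)).symm).trans
    (Equiv.sumComm (Fin 2) (Fin 3)))).trans (sumAlgEquiv K (Fin 3) (Fin 2))

lemma toB_X_hi (K : Type*) [CommSemiring K] (i : Fin 3) :
    toB K (X (Fin.natAdd 2 i)) = X i := by
  have h1 : (finSumFinEquiv (m := 2) (n := 3)).symm (Fin.natAdd 2 i) = Sum.inr i :=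
    finSumFinEquiv_symm_apply_natAdd i
  simp [toB, h1, sumToIter_Xl]

lemma toB_X_lo (K : Type*) [CommSemiring K] (h25 : 2 ≤ 5) (j : Fin 2) :
    toB K (X (Fin.castLE h25 j)) = C (X j) := by
  have h0 : Fin.castLE h25 j = Fin.castAdd 3 j := rfl
  have h1 : (finSumFinEquiv (m := 2) (n := 3)).symm (Fin.castAdd 3 j) = Sum.inl j :=
    finSumFinEquiv_symm_apply_castAdd j
  simp [toB, h0, h1, sumToIter_Xr]

lemma toB_rename (K : Type*) [CommSemiring K] (h25 : 2 ≤ 5) (φ : MvPolynomial (Fin 2) K) :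
    toB K (rename (Fin.castLE h25) φ) = C φ := by
  induction φ using MvPolynomial.induction_on with
  | C k =>
    rw [rename_C]
    rw [show (C k : MvPolynomial (Fin 5) K) = algebraMap K _ k from rfl, AlgEquiv.commutes]
    simp [MvPolynomial.algebraMap_eq]
  | add φ ψ hφ hψ => simp [hφ, hψ]
  | mul_X φ j hφ => simp [map_mul, hφ, toB_X_lo]

end Stmt9Aux

open Stmt9Aux Pointwise

/-- Let `φ : P^1 → P^2` be given by `(X1:X2) ↦ (g1:g2:g3)(X1,X2)` with
`g1,g2,g3` homogeneous of degree `d`, not all zero, whose gcd has degree `< d` (i.e. every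
common divisor has total degree `< d`).  If `(p,q)` is a `μ`-basis — a homogeneous basis
of the syzygy module of `(g1,g2,g3)` over `K[X1,X2]`, of degrees `μ` and `d−μ` — then the
bilinear polynomials `P = Σ p_i(X) T_i`, `Q = Σ q_i(X) T_i` form a regular sequence in
`K[X1,X2,T1,T2,T3]` (variables `0,1` are `X1,X2`, variables `2,3,4` are `T1,T2,T3`). -/
theorem stmt9 {K : Type*} [Field K] (d : ℕ) (hd : 1 ≤ d)
    (g : Fin 3 → MvPolynomial (Fin 2) K)
    (hg : ∀ i, (g i).IsHomogeneous d)
    (hg0 : ¬ ∀ i, g i = 0)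
    (hgcd : ∀ h : MvPolynomial (Fin 2) K, (∀ i, h ∣ g i) → h.totalDegree < d)
    (μ : ℕ) (p q : Fin 3 → MvPolynomial (Fin 2) K)
    (hp : ∀ i, (p i).IsHomogeneous μ) (hq : ∀ i, (q i).IsHomogeneous (d - μ))
    (hpsyz : ∑ i, p i * g i = 0) (hqsyz : ∑ i, q i * g i = 0)
    -- `(p, q)` generate the syzygy module of `(g1, g2, g3)` ...
    (hgen : ∀ a : Fin 3 → MvPolynomial (Fin 2) K, ∑ i, a i * g i = 0 →
      ∃ c e : MvPolynomial (Fin 2) K, ∀ i, a i = c * p i + e * q i)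
    -- ... and are linearly independent over `K[X1,X2]`
    (hindep : ∀ c e : MvPolynomial (Fin 2) K, (∀ i, c * p i + e * q i = 0) →
      c = 0 ∧ e = 0) :
    RingTheory.Sequence.IsRegular (MvPolynomial (Fin 5) K)
      [∑ i, rename (Fin.castLE (by omega)) (p i) * X (Fin.natAdd 2 i),
       ∑ i, rename (Fin.castLE (by omega)) (q i) * X (Fin.natAdd 2 i)] := by
  classical
  set PP : MvPolynomial (Fin 5) K :=
    ∑ i, rename (Fin.castLE (by omega : 2 ≤ 5)) (p i) * X (Fin.natAdd 2 i) with hPPdef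
  set QQ : MvPolynomial (Fin 5) K :=
    ∑ i, rename (Fin.castLE (by omega : 2 ≤ 5)) (q i) * X (Fin.natAdd 2 i) with hQQdef
  have hPP : toB K PP = ∑ i, C (p i) * X i := by
    rw [hPPdef, map_sum]
    exact Finset.sum_congr rfl fun i _ => by rw [map_mul, toB_rename, toB_X_hi]
  have hQQ : toB K QQ = ∑ i, C (q i) * X i := by
    rw [hQQdef, map_sum]
    exact Finset.sum_congr rfl fun i _ => by rw [map_mul, toB_rename, toB_X_hi]
  have hrel : IsRelPrime PP QQ := by
    intro r h1 h2
    have hd1 : toB K r ∣ ∑ i, C (p i) * X i := by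
      rw [← hPP]; exact map_dvd (toB K) h1
    have hd2 : toB K r ∣ ∑ i, C (q i) * X i := by
      rw [← hQQ]; exact map_dvd (toB K) h2
    have hu := relPrime g p q hpsyz hgen hindep hd1 hd2
    have := hu.map (toB K).symm
    simpa using this
  have hpne : ∃ i, p i ≠ 0 := by
    by_contra hall
    push_neg at hall
    exact one_ne_zero (hindep 1 0 (fun i => by simp [hall i])).1
  have hqne : ∃ i, q i ≠ 0 := by
    by_contra hall
    push_neg at hall
    exact one_ne_zero (hindep 0 1 (fun i => by simp [hall i])).2
  have hPne : PP ≠ 0 := by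
    intro h0
    obtain ⟨i, hi⟩ := hpne
    apply hi
    have h1 : toB K PP = 0 := by rw [h0, map_zero]
    rw [hPP] at h1
    rw [← coeff_lin p i, h1, coeff_zero]
  have hQne : QQ ≠ 0 := by
    intro h0
    obtain ⟨i, hi⟩ := hqne
    apply hi
    have h1 : toB K QQ = 0 := by rw [h0, map_zero]
    rw [hQQ] at h1
    rw [← coeff_lin q i, h1, coeff_zero]
  have hmem : ∀ x : MvPolynomial (Fin 5) K,
      x ∈ (PP • ⊤ : Submodule (MvPolynomial (Fin 5) K) (MvPolynomial (Fin 5) K)) ↔ PP ∣ x := by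
    intro x
    rw [← Submodule.ideal_span_singleton_smul, Ideal.smul_eq_mul, Ideal.mul_top,
      Ideal.mem_span_singleton]
  refine ⟨?_, ?_⟩
  · refine RingTheory.Sequence.IsWeaklyRegular.cons ?_
      ((RingTheory.Sequence.isWeaklyRegular_singleton_iff _ _).mpr ?_)
    · intro x y hxy
      exact mul_left_cancel₀ hPne (by simpa only [smul_eq_mul] using hxy)
    · intro x y hxy
      obtain ⟨x, rfl⟩ := Submodule.Quotient.mk_surjective _ x
      obtain ⟨y, rfl⟩ := Submodule.Quotient.mk_surjective _ y
      have hxy' : Submodule.Quotient.mk (p := (PP • ⊤ : Submodule (MvPolynomial (Fin 5) K)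
          (MvPolynomial (Fin 5) K))) (QQ • x) = Submodule.Quotient.mk (QQ • y) := by
        rw [Submodule.Quotient.mk_smul, Submodule.Quotient.mk_smul]; exact hxy
      rw [Submodule.Quotient.eq] at hxy'
      rename' hxy' => hxy
      rw [Submodule.Quotient.eq]
      have hdvd : PP ∣ QQ * (x - y) := by
        have := (hmem _).mp hxy
        simpa only [smul_eq_mul, ← mul_sub] using this
      exact (hmem _).mpr (hrel.dvd_of_dvd_mul_left hdvd)
  · intro htop
    have h1 : (1 : MvPolynomial (Fin 5) K) ∈ Ideal.ofList [PP, QQ] • (⊤ : Submodule (MvPolynomial (Fin 5) K) (MvPolynomial (Fin 5) K)) := by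
      rw [← htop]; trivial
    rw [Ideal.smul_eq_mul, Ideal.mul_top] at h1
    have hz : ∀ (r' : Fin 3 → MvPolynomial (Fin 2) K),
        aeval (fun _ => (0:K)) (∑ i, rename (Fin.castLE (by omega : 2 ≤ 5)) (r' i)
          * X (Fin.natAdd 2 i)) = 0 := by
      intro r'
      rw [map_sum]
      refine Finset.sum_eq_zero fun i _ => ?_
      rw [map_mul, aeval_X, mul_zero]
    have hker : Ideal.ofList [PP, QQ] ≤
        RingHom.ker ((aeval (fun _ => (0:K)) : MvPolynomial (Fin 5) K →ₐ[K] K)).toRingHom := by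
      refine Ideal.span_le.mpr ?_
      intro r hr
      simp only [Set.mem_setOf_eq, List.mem_cons, List.mem_singleton, List.not_mem_nil,
        or_false] at hr
      rcases hr with rfl | rfl
      · rw [SetLike.mem_coe, RingHom.mem_ker, hPPdef]
        exact hz p
      · rw [SetLike.mem_coe, RingHom.mem_ker, hQQdef]
        exact hz q
    have := hker h1
    simp [RingHom.mem_ker] at this
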